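/- Consider the system r₃' = -(AMQ - r₃)(A(1+M-r₃) + (M-r₃)(r₃-1) - v₃)·r₃, v₃' = (AMQ - r₃)(A(1+M-r₃) + (M-r₃)(r₃-1) - v₃)·v₃, with A ∈ (0,1), M ∈ (-1,0), Q > 0, A-M+AM > 0. Then the origin is a hyperbolic saddle with unstable r₃-direction and stable v₃-direction, and the curve v₃ = A-M+AM + (1-A+M)r₃ - r₃² consists of equilibria whose nontrivial eigenvalue equals -AMQ(A-M+AM) + O(r₃) > 0 for r₃ small. -/

import Mathlib

private lemma fv_deriv (K c : ℝ) (v0 : ℝ) :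
    deriv (fun v : ℝ => K*(c - v)*v) v0 = K*(c - v0) - K*v0 := by
  have h : HasDerivAt (fun v : ℝ => K*(c - v)*v)
      (((0*(c - v0) + K*(0 - 1))*v0 + K*(c - v0)*1)) v0 := by
    exact (((hasDerivAt_const v0 K).mul ((hasDerivAt_const v0 c).sub (hasDerivAt_id v0))).mul
      (hasDerivAt_id v0))
  have := h.deriv
  rw [this]; ring

theorem stmt_17 (A M Q : ℝ)
    (hA : A ∈ Set.Ioo (0:ℝ) 1) (hM : M ∈ Set.Ioo (-1:ℝ) 0) (hQ : 0 < Q)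
    (hpos : 0 < A - M + A*M)
    (Fr Fv : ℝ → ℝ → ℝ)
    (hFr : ∀ r₃ v₃, Fr r₃ v₃ = -((A*M*Q - r₃)*(A*(1 + M - r₃) + (M - r₃)*(r₃ - 1) - v₃)*r₃))
    (hFv : ∀ r₃ v₃, Fv r₃ v₃ = (A*M*Q - r₃)*(A*(1 + M - r₃) + (M - r₃)*(r₃ - 1) - v₃)*v₃)
    (ℓ : ℝ → ℝ) (hℓ : ∀ r₃, ℓ r₃ = A - M + A*M + (1 - A + M)*r₃ - r₃^2) :
    (deriv (fun r => Fr r 0) 0 = -(A*M*Q*(A - M + A*M)) ∧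
      0 < deriv (fun r => Fr r 0) 0) ∧
    (deriv (fun v => Fv 0 v) 0 = A*M*Q*(A - M + A*M) ∧
      deriv (fun v => Fv 0 v) 0 < 0) ∧
    (∀ r₃, Fr r₃ (ℓ r₃) = 0 ∧ Fv r₃ (ℓ r₃) = 0) ∧
    (∀ r₃, deriv (fun v => Fv r₃ v) (ℓ r₃) = -((A*M*Q - r₃) * ℓ r₃)) ∧
    (∃ δ > 0, ∀ r₃ ∈ Set.Ico (0:ℝ) δ, 0 < deriv (fun v => Fv r₃ v) (ℓ r₃)) := by
  obtain ⟨hA0, hA1⟩ := hA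
  obtain ⟨hM1, hM0⟩ := hM
  have hAMQ : A*M*Q < 0 := mul_neg_of_neg_of_pos (mul_neg_of_pos_of_neg hA0 hM0) hQ
  -- derivative of r ↦ Fr r 0 at 0
  have hderivFr : deriv (fun r => Fr r 0) 0 = -(A*M*Q*(A - M + A*M)) := by
    have hid : HasDerivAt (fun r : ℝ => r) 1 0 := hasDerivAt_id 0
    have h1 : HasDerivAt (fun r : ℝ => A*M*Q - r) (0 - 1) 0 :=
      (hasDerivAt_const 0 (A*M*Q)).sub hid
    have h2a : HasDerivAt (fun r : ℝ => A*(1 + M - r)) (A * (0 - 1)) 0 :=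
      ((hasDerivAt_const 0 (1 + M)).sub hid).const_mul A
    have h2b : HasDerivAt (fun r : ℝ => (M - r)*(r - 1))
        ((0 - 1)*(0 - 1) + (M - 0)*(1 - 0)) 0 :=
      ((hasDerivAt_const 0 M).sub hid).mul (hid.sub (hasDerivAt_const 0 1))
    have h2 : HasDerivAt (fun r : ℝ => A*(1 + M - r) + (M - r)*(r - 1) - 0)
        (A * (0 - 1) + ((0 - 1)*(0 - 1) + (M - 0)*(1 - 0)) - 0) 0 :=
      (h2a.add h2b).sub (hasDerivAt_const 0 0)
    have h3 : HasDerivAt (fun r : ℝ => -((A*M*Q - r)*(A*(1 + M - r) + (M - r)*(r - 1) - 0)*r))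
        (-(((0 - 1)*(A*(1 + M - 0) + (M - 0)*(0 - 1) - 0) + (A*M*Q - 0)*(A*(0 - 1) + ((0 - 1)*(0 - 1) + (M - 0)*(1 - 0)) - 0))*0
          + ((A*M*Q - 0)*(A*(1 + M - 0) + (M - 0)*(0 - 1) - 0))*1)) 0 :=
      ((h1.mul h2).mul hid).neg
    have hfun : (fun r => Fr r 0) =
        fun r : ℝ => -((A*M*Q - r)*(A*(1 + M - r) + (M - r)*(r - 1) - 0)*r) := by
      funext r; rw [hFr]
    rw [hfun, h3.deriv]; ring
  -- derivative of v ↦ Fv 0 v at 0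
  have hfunv : ∀ r : ℝ, (fun v => Fv r v) =
      fun v : ℝ => (A*M*Q - r)*((A*(1 + M - r) + (M - r)*(r - 1)) - v)*v := by
    intro r; funext v; rw [hFv]
  have hderivFv : ∀ r v0 : ℝ, deriv (fun v => Fv r v) v0 =
      (A*M*Q - r)*((A*(1 + M - r) + (M - r)*(r - 1)) - v0) - (A*M*Q - r)*v0 := by
    intro r v0; rw [hfunv r, fv_deriv]
  have hℓc : ∀ r : ℝ, ℓ r = A*(1 + M - r) + (M - r)*(r - 1) := by
    intro r; rw [hℓ]; ring
  refine ⟨⟨hderivFr, ?_⟩, ⟨?_, ?_⟩, ?_, ?_, ?_⟩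
  · rw [hderivFr]; nlinarith [mul_neg_of_neg_of_pos hAMQ hpos]
  · rw [hderivFv 0 0]; ring
  · rw [hderivFv 0 0]
    have : (A*M*Q - 0)*((A*(1 + M - 0) + (M - 0)*(0 - 1)) - 0) - (A*M*Q - 0)*0
        = A*M*Q*(A - M + A*M) := by ring
    rw [this]; exact mul_neg_of_neg_of_pos hAMQ hpos
  · intro r
    constructor
    · rw [hFr r, hℓc r]; ring
    · rw [hFv r, hℓc r]; ring
  · intro r
    rw [hderivFv r (ℓ r), hℓc r]; ring
  · refine ⟨min 1 ((A - M + A*M)/2), lt_min one_pos (by linarith), ?_⟩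
    intro r ⟨hr0, hrδ⟩
    have hr1 : r < 1 := lt_of_lt_of_le hrδ (min_le_left _ _)
    have hr2 : r < (A - M + A*M)/2 := lt_of_lt_of_le hrδ (min_le_right _ _)
    rw [hderivFv r (ℓ r)]
    have hℓpos : 0 < ℓ r := by
      rw [hℓ]; nlinarith [sq_nonneg r]
    have hK : A*M*Q - r < 0 := by linarith
    have hval : (A*M*Q - r)*((A*(1 + M - r) + (M - r)*(r - 1)) - ℓ r) - (A*M*Q - r)*(ℓ r)
        = -((A*M*Q - r) * ℓ r) := by rw [hℓc r]; ring
    rw [hval]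
    nlinarith [mul_neg_of_neg_of_pos hK hℓpos]
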